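/- For all integers a, b, L with a, L ≥ 0, ∑_{k=0}^{L} (−1)^k q^{binom(k,2)} [L choose k]_q [L+a−k choose b]_q = q^{L(L+a−b)} [a choose b−L]_q. -/

import Mathlib

open Finset

/-- The variable `q`, realized as the generator of the field of rational functions over `ℚ`. -/
noncomputable def qq : RatFunc ℚ := RatFunc.X

/-- `(x)_n = ∏_{j=1}^n (1 - x^j)`. -/
noncomputable def qPoch (x : RatFunc ℚ) (n : ℕ) : RatFunc ℚ :=
  ∏ j ∈ Finset.range n, (1 - x ^ (j + 1))

/-- Gaussian binomial coefficient `[n choose k]_x`, zero unless `0 ≤ k ≤ n`. -/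
noncomputable def qBin (x : RatFunc ℚ) (n k : ℤ) : RatFunc ℚ :=
  if 0 ≤ k ∧ k ≤ n then qPoch x n.toNat / (qPoch x k.toNat * qPoch x (n - k).toNat) else 0

/-- The `q`-trinomial coefficient `[L, b; a]_2` in base `x`. -/
noncomputable def qTri (x : RatFunc ℚ) (L : ℕ) (b a : ℤ) : RatFunc ℚ :=
  ∑ k ∈ Finset.range (L + 1),
    x ^ ((k : ℤ) * (k + b)) * qBin x (L : ℤ) (k : ℤ) * qBin x ((L : ℤ) - k) ((k : ℤ) + a)

/-- The `q`-trinomial `T_n(L, a)`, written in terms of `s = q^{1/2}` (so the base is `s^2`):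
`T_n(L,a) = ∑ s^{r(r-n)} (s²)_L / ((s²)_{(L-a-r)/2} (s²)_{(L+a-r)/2} (s²)_r)`,
the sum over `r ≥ 0` with `L - a - r` even and `r ≤ L - |a|`; zero for `|a| > L`. -/
noncomputable def qT (s : RatFunc ℚ) (n : ℤ) (L : ℕ) (a : ℤ) : RatFunc ℚ :=
  ∑ r ∈ Finset.range (L + 1),
    if Even ((L : ℤ) - a - r) ∧ (r : ℤ) ≤ (L : ℤ) - |a| then
      s ^ ((r : ℤ) * ((r : ℤ) - n)) * qPoch (s ^ 2) L /
        (qPoch (s ^ 2) (((L : ℤ) - a - r) / 2).toNat *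
          qPoch (s ^ 2) (((L : ℤ) + a - r) / 2).toNat * qPoch (s ^ 2) r)
    else 0

/-- The Cartan matrix of the Lie algebra `A_n`. -/
def cartanA (n : ℕ) (i j : Fin n) : ℤ :=
  if i = j then 2 else if |(i : ℤ) - (j : ℤ)| = 1 then -1 else 0

lemma one_sub_qq_pow_ne_zero (n : ℕ) : (1 : RatFunc ℚ) - qq ^ (n+1) ≠ 0 := by
  rw [sub_ne_zero]
  intro h
  rw [qq] at h
  have h2 : (algebraMap (Polynomial ℚ) (RatFunc ℚ)) 1 =
      (algebraMap (Polynomial ℚ) (RatFunc ℚ)) (Polynomial.X ^ (n+1)) := by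
    rw [map_pow, RatFunc.algebraMap_X, map_one, h]
  have h3 := RatFunc.algebraMap_injective ℚ h2
  apply_fun Polynomial.natDegree at h3
  simp at h3

lemma qPoch_ne_zero (n : ℕ) : qPoch qq n ≠ 0 := by
  unfold qPoch
  exact Finset.prod_ne_zero_iff.mpr fun j _ => one_sub_qq_pow_ne_zero j

lemma qPoch_succ (n : ℕ) : qPoch qq (n+1) = qPoch qq n * (1 - qq^(n+1)) := by
  unfold qPoch
  rw [Finset.prod_range_succ]

lemma qBin_of_not {n k : ℤ} (h : ¬(0 ≤ k ∧ k ≤ n)) : qBin qq n k = 0 := if_neg h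

lemma qBin_natCast (n k : ℕ) (h : k ≤ n) :
    qBin qq (n:ℤ) (k:ℤ) = qPoch qq n / (qPoch qq k * qPoch qq (n-k)) := by
  unfold qBin
  rw [if_pos ⟨Int.natCast_nonneg k, by exact_mod_cast h⟩]
  have h1 : ((n:ℤ)).toNat = n := by omega
  have h2 : ((k:ℤ)).toNat = k := by omega
  have h3 : ((n:ℤ) - k).toNat = n - k := by omega
  rw [h1, h2, h3]

lemma qBin_self (n : ℕ) : qBin qq (n:ℤ) (n:ℤ) = 1 := by
  rw [qBin_natCast n n le_rfl]
  simp [qPoch, div_self (qPoch_ne_zero n)]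
  exact qPoch_ne_zero n

lemma qBin_zero (n : ℕ) : qBin qq (n:ℤ) 0 = 1 := by
  have := qBin_natCast n 0 (Nat.zero_le n)
  push_cast at this
  rw [this]
  simp [qPoch]
  exact qPoch_ne_zero n

lemma pascalA (n k : ℕ) :
    qBin qq ((n:ℤ)+1) (k:ℤ) = qBin qq n ((k:ℤ)-1) + qq^k * qBin qq n k := by
  have hcast : ((n:ℤ)+1) = ((n+1:ℕ):ℤ) := by push_cast; ring
  rcases Nat.eq_zero_or_pos k with hk0 | hk1
  · subst hk0
    rw [hcast, Nat.cast_zero, qBin_zero (n+1), qBin_zero n,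
        qBin_of_not (by norm_num : ¬((0:ℤ) ≤ 0 - 1 ∧ (0:ℤ)-1 ≤ n))]
    ring
  rcases lt_trichotomy k (n+1) with hk | hk | hk
  · obtain ⟨c, rfl⟩ : ∃ c, k = c+1 := ⟨k-1, by omega⟩
    obtain ⟨d, rfl⟩ : ∃ d, n = c+1+d := ⟨n-(c+1), by omega⟩
    have e1 : (((c+1:ℕ)):ℤ) - 1 = ((c:ℕ):ℤ) := by push_cast; ring
    rw [hcast, e1, qBin_natCast (c+1+d+1) (c+1) (by omega),
        qBin_natCast (c+1+d) c (by omega), qBin_natCast (c+1+d) (c+1) (by omega)]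
    have s1 : c+1+d+1-(c+1) = d+1 := by omega
    have s2 : c+1+d-c = d+1 := by omega
    have s3 : c+1+d-(c+1) = d := by omega
    rw [s1, s2, s3]
    have p1 : qPoch qq (c+1+d+1) = qPoch qq (c+1+d) * (1 - qq^(c+1+d+1)) := qPoch_succ _
    have p2 : qPoch qq (c+1) = qPoch qq c * (1 - qq^(c+1)) := qPoch_succ _
    have p3 : qPoch qq (d+1) = qPoch qq d * (1 - qq^(d+1)) := qPoch_succ _
    rw [p1, p2, p3]
    have hx : qq ^ (c+1+d+1) = qq^(c+1) * qq^(d+1) := by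
      rw [← pow_add, show c+1+(d+1) = c+1+d+1 from by omega]
    rw [hx]
    have n1 : (1:RatFunc ℚ) - qq^(c+1) ≠ 0 := one_sub_qq_pow_ne_zero c
    have n2 : (1:RatFunc ℚ) - qq^(d+1) ≠ 0 := one_sub_qq_pow_ne_zero d
    have n3 := qPoch_ne_zero c
    have n4 := qPoch_ne_zero d
    have n5 := qPoch_ne_zero (c+1+d)
    field_simp
    ring
  · subst hk
    rw [hcast, qBin_self (n+1)]
    have e1 : ((n+1:ℕ):ℤ) - 1 = ((n:ℕ):ℤ) := by push_cast; ring
    rw [e1, qBin_self n, qBin_of_not (by push_cast; omega)]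
    ring
  · rw [qBin_of_not (by push_cast; omega), qBin_of_not (by push_cast; omega), qBin_of_not (by push_cast; omega)]
    ring

lemma pascalB (m : ℕ) (b : ℤ) :
    qBin qq ((m:ℤ)+1) b = qBin qq m b + qq^((m:ℤ)+1-b) * qBin qq m (b-1) := by
  have hcast : ((m:ℤ)+1) = ((m+1:ℕ):ℤ) := by push_cast; ring
  rcases lt_trichotomy b 0 with hb | hb | hb
  · rw [qBin_of_not (by omega), qBin_of_not (by omega), qBin_of_not (by omega)]
    ring
  · subst hb
    have z1 : qBin qq (m:ℤ) ((0:ℤ)-1) = 0 := qBin_of_not (by omega)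
    rw [hcast, qBin_zero (m+1), qBin_zero m, z1]
    ring
  rcases lt_trichotomy b ((m:ℤ)+1) with hbm | hbm | hbm
  · -- 1 ≤ b ≤ m
    obtain ⟨c, rfl⟩ : ∃ c : ℕ, b = (c:ℤ)+1 := ⟨(b-1).toNat, by omega⟩
    obtain ⟨d, rfl⟩ : ∃ d, m = c+1+d := ⟨m-(c+1), by push_cast at hbm ⊢; omega⟩
    have e0 : ((c:ℤ)+1) = ((c+1:ℕ):ℤ) := by push_cast; ring
    have e1 : ((c:ℤ)+1) - 1 = ((c:ℕ):ℤ) := by push_cast; ring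
    have e2 : ((c+1+d:ℕ):ℤ)+1-((c:ℤ)+1) = ((d+1:ℕ):ℤ) := by push_cast; ring
    rw [e2, hcast, e1, e0, qBin_natCast (c+1+d+1) (c+1) (by omega),
        qBin_natCast (c+1+d) (c+1) (by omega), qBin_natCast (c+1+d) c (by omega),
        zpow_natCast]
    have s1 : c+1+d+1-(c+1) = d+1 := by omega
    have s2 : c+1+d-(c+1) = d := by omega
    have s3 : c+1+d-c = d+1 := by omega
    rw [s1, s2, s3]
    have p1 : qPoch qq (c+1+d+1) = qPoch qq (c+1+d) * (1 - qq^(c+1+d+1)) := qPoch_succ _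
    have p2 : qPoch qq (c+1) = qPoch qq c * (1 - qq^(c+1)) := qPoch_succ _
    have p3 : qPoch qq (d+1) = qPoch qq d * (1 - qq^(d+1)) := qPoch_succ _
    rw [p1, p2, p3]
    have hx : qq ^ (c+1+d+1) = qq^(c+1) * qq^(d+1) := by
      rw [← pow_add, show c+1+(d+1) = c+1+d+1 from by omega]
    rw [hx]
    have n1 : (1:RatFunc ℚ) - qq^(c+1) ≠ 0 := one_sub_qq_pow_ne_zero c
    have n2 : (1:RatFunc ℚ) - qq^(d+1) ≠ 0 := one_sub_qq_pow_ne_zero d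
    have n3 := qPoch_ne_zero c
    have n4 := qPoch_ne_zero d
    have n5 := qPoch_ne_zero (c+1+d)
    field_simp
    ring
  · -- b = m+1
    have z1 : qBin qq (m:ℤ) ((m:ℤ)+1) = 0 := qBin_of_not (by omega)
    have z2 : qBin qq (m:ℤ) ((m:ℤ)+1-1) = 1 := by
      rw [show (m:ℤ)+1-1 = (m:ℤ) from by ring]; exact qBin_self m
    rw [hbm, z1, z2, show ((m:ℤ))+1-((m:ℤ)+1) = 0 from by ring, zpow_zero,
        hcast, qBin_self (m+1)]
    ring
  · rw [qBin_of_not (by omega), qBin_of_not (by omega), qBin_of_not (by omega)]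
    ring

theorem stmt15 (a L : ℕ) (b : ℤ) :
    ∑ k ∈ Finset.range (L + 1),
        (-1 : RatFunc ℚ) ^ k * qq ^ (k * (k - 1) / 2) * qBin qq (L : ℤ) (k : ℤ) *
          qBin qq ((L : ℤ) + a - k) b =
      qq ^ ((L : ℤ) * ((L : ℤ) + a - b)) * qBin qq (a : ℤ) (b - L) := by
  have hq : (qq : RatFunc ℚ) ≠ 0 := RatFunc.X_ne_zero
  induction L generalizing b with
  | zero =>
      rw [Finset.sum_range_one]
      have h00 : qBin qq ((0:ℕ):ℤ) ((0:ℕ):ℤ) = 1 := qBin_self 0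
      norm_num at h00 ⊢
      rw [h00]
      ring
  | succ L IH =>
      have main : ∑ k ∈ Finset.range (L+1+1), (-1 : RatFunc ℚ)^k * qq^(k*(k-1)/2) *
              qBin qq ((L:ℤ)+1) (k:ℤ) * qBin qq ((L:ℤ)+1+(a:ℤ)-(k:ℤ)) b
          = qq ^ (((L:ℤ)+1) * ((L:ℤ)+1+(a:ℤ)-b)) * qBin qq (a:ℤ) (b-((L:ℤ)+1)) := by
        calc
          ∑ k ∈ Finset.range (L+1+1), (-1 : RatFunc ℚ)^k * qq^(k*(k-1)/2) *
              qBin qq ((L:ℤ)+1) (k:ℤ) * qBin qq ((L:ℤ)+1+(a:ℤ)-(k:ℤ)) b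
            = ∑ k ∈ Finset.range (L+1+1),
                (((-1 : RatFunc ℚ)^k * qq^(k*(k-1)/2) * qBin qq (L:ℤ) ((k:ℤ)-1) *
                    qBin qq ((L:ℤ)+1+(a:ℤ)-(k:ℤ)) b)
                + ((-1 : RatFunc ℚ)^k * (qq^(k*(k-1)/2) * qq^k) * qBin qq (L:ℤ) (k:ℤ) *
                    qBin qq ((L:ℤ)+1+(a:ℤ)-(k:ℤ)) b)) := by
              refine Finset.sum_congr rfl fun k _ => ?_
              rw [pascalA L k]; ring
          _ = (∑ k ∈ Finset.range (L+1),
                ((-1 : RatFunc ℚ)^(k+1) * qq^((k+1)*((k+1)-1)/2) *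
                    qBin qq (L:ℤ) (((k+1:ℕ):ℤ)-1) * qBin qq ((L:ℤ)+1+(a:ℤ)-((k+1:ℕ):ℤ)) b))
              + ∑ k ∈ Finset.range (L+1),
                ((-1 : RatFunc ℚ)^k * (qq^(k*(k-1)/2) * qq^k) * qBin qq (L:ℤ) (k:ℤ) *
                    qBin qq ((L:ℤ)+1+(a:ℤ)-(k:ℤ)) b) := by
              have hA : (∑ k ∈ Finset.range (L+1+1),
                    ((-1 : RatFunc ℚ)^k * qq^(k*(k-1)/2) * qBin qq (L:ℤ) ((k:ℤ)-1) *
                      qBin qq ((L:ℤ)+1+(a:ℤ)-(k:ℤ)) b))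
                  = (∑ k ∈ Finset.range (L+1),
                      ((-1 : RatFunc ℚ)^(k+1) * qq^((k+1)*((k+1)-1)/2) *
                        qBin qq (L:ℤ) (((k+1:ℕ):ℤ)-1) * qBin qq ((L:ℤ)+1+(a:ℤ)-((k+1:ℕ):ℤ)) b))
                    + ((-1 : RatFunc ℚ)^0 * qq^(0*(0-1)/2) * qBin qq (L:ℤ) (((0:ℕ):ℤ)-1) *
                        qBin qq ((L:ℤ)+1+(a:ℤ)-((0:ℕ):ℤ)) b) := Finset.sum_range_succ' _ (L+1)
              have hB : (∑ k ∈ Finset.range (L+1+1),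
                    ((-1 : RatFunc ℚ)^k * (qq^(k*(k-1)/2) * qq^k) * qBin qq (L:ℤ) (k:ℤ) *
                      qBin qq ((L:ℤ)+1+(a:ℤ)-(k:ℤ)) b))
                  = (∑ k ∈ Finset.range (L+1),
                      ((-1 : RatFunc ℚ)^k * (qq^(k*(k-1)/2) * qq^k) * qBin qq (L:ℤ) (k:ℤ) *
                        qBin qq ((L:ℤ)+1+(a:ℤ)-(k:ℤ)) b))
                    + ((-1 : RatFunc ℚ)^(L+1) * (qq^((L+1)*((L+1)-1)/2) * qq^(L+1)) *
                        qBin qq (L:ℤ) ((L+1:ℕ):ℤ) *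
                        qBin qq ((L:ℤ)+1+(a:ℤ)-((L+1:ℕ):ℤ)) b) := Finset.sum_range_succ _ (L+1)
              have z1 : qBin qq (L:ℤ) (((0:ℕ):ℤ)-1) = 0 := qBin_of_not (by omega)
              have z2 : qBin qq (L:ℤ) (((L+1:ℕ)):ℤ) = 0 := qBin_of_not (by omega)
              rw [Finset.sum_add_distrib, hA, hB, z1, z2]
              ring
          _ = ∑ k ∈ Finset.range (L+1), qq^((L:ℤ)+1+(a:ℤ)-b) *
                ((-1 : RatFunc ℚ)^k * qq^(k*(k-1)/2) * qBin qq (L:ℤ) (k:ℤ) *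
                    qBin qq ((L:ℤ)+(a:ℤ)-(k:ℤ)) (b-1)) := by
              rw [← Finset.sum_add_distrib]
              refine Finset.sum_congr rfl fun k hk => ?_
              rw [Finset.mem_range] at hk
              have hk' : k ≤ L := by omega
              have hm : ((L+a-k:ℕ):ℤ) = (L:ℤ)+(a:ℤ)-(k:ℤ) := by omega
              have hp := pascalB (L+a-k) b
              rw [hm] at hp
              have e1 : ((k+1:ℕ):ℤ)-1 = (k:ℤ) := by push_cast; ring
              have e2 : (L:ℤ)+1+(a:ℤ)-((k+1:ℕ):ℤ) = (L:ℤ)+(a:ℤ)-(k:ℤ) := by push_cast; ring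
              have e3 : (L:ℤ)+1+(a:ℤ)-(k:ℤ) = (L:ℤ)+(a:ℤ)-(k:ℤ)+1 := by ring
              have e4 : (k+1)*((k+1)-1)/2 = k*(k-1)/2 + k := by
                have a1 := Nat.choose_two_right k
                have a2 := Nat.choose_two_right (k+1)
                have a3 : (k+1).choose 2 = k.choose 1 + k.choose 2 := Nat.choose_succ_succ k 1
                rw [Nat.choose_one_right] at a3
                omega
              have e5 : (qq:RatFunc ℚ)^k * qq^((L:ℤ)+(a:ℤ)-(k:ℤ)+1-b) = qq^((L:ℤ)+1+(a:ℤ)-b) := by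
                rw [← zpow_natCast qq k, ← zpow_add₀ hq]
                congr 1; ring
              rw [e1, e2, e3, e4, hp, pow_add, pow_succ, ← e5]
              ring
          _ = qq^((L:ℤ)+1+(a:ℤ)-b) *
                (qq ^ ((L:ℤ) * ((L:ℤ)+(a:ℤ)-(b-1))) * qBin qq (a:ℤ) ((b-1)-(L:ℤ))) := by
              rw [← Finset.mul_sum, IH (b-1)]
          _ = qq ^ (((L:ℤ)+1) * ((L:ℤ)+1+(a:ℤ)-b)) * qBin qq (a:ℤ) (b-((L:ℤ)+1)) := by
              rw [← mul_assoc, ← zpow_add₀ hq,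
                  show (L:ℤ)+1+(a:ℤ)-b + (L:ℤ)*((L:ℤ)+(a:ℤ)-(b-1))
                      = ((L:ℤ)+1)*((L:ℤ)+1+(a:ℤ)-b) from by ring,
                  show b-1-(L:ℤ) = b-((L:ℤ)+1) from by ring]
      have c1 : ((L+1:ℕ):ℤ) = (L:ℤ)+1 := by push_cast; ring
      rw [c1]
      exact main
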